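/- Let α and β be compositions of m and n respectively, corresponding to subsets of [m-1] and [n-1] via partial sums. Let w_α and w_β be words on disjoint alphabets with descent compositions α and β respectively. Then the product of fundamental quasisymmetric functions satisfies F_α · F_β = ∑_{w ∈ w_α ⧢ w_β} F_{Des(w)}, where the sum is over all shuffles w of w_α and w_β, and F_{Des(w)} denotes the fundamental quasisymmetric function of the descent composition of w. -/

import Mathlib

/-- The multiset of all shuffles (interleavings) of two words. -/
def shuffles {α : Type*} : List α → List α → Multiset (List α)
  | [], w => {w}
  | a :: v, [] => {a :: v}
  | a :: v, b :: w =>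
      ((shuffles v (b :: w)).map (a :: ·)) + ((shuffles (a :: v) w).map (b :: ·))
  termination_by v w => v.length + w.length
  decreasing_by all_goals (simp; try omega)

/-- The descent composition of a word of distinct letters. -/
def descComp : List ℕ → List ℕ
  | [] => []
  | [_] => [1]
  | a :: b :: t =>
      if b < a then 1 :: descComp (b :: t)
      else
        match descComp (b :: t) with
        | [] => [1]
        | c :: r => (c + 1) :: r

/-- The list of partial sums of a composition. -/
def psums : List ℕ → List ℕ
  | [] => []
  | a :: t => a :: (psums t).map (a + ·)

/-- The descent set of a composition `α ⊨ n`: the set of proper partial sums. -/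
def Dset (α : List ℕ) : Finset ℕ := (psums α).dropLast.toFinset

/-- The exponent composition of a monomial `d` in the variables `x_0, x_1, …`:
the list of its nonzero exponents read in increasing order of the variable
index. -/
noncomputable def expComp (d : ℕ →₀ ℕ) : List ℕ :=
  (d.support.sort (· ≤ ·)).map d

/-- `β` refines `α` (written `β ≤ α`): both are compositions of the same `n`
and every partial sum of `α` is a partial sum of `β`. -/
def Refines (β α : List ℕ) : Prop := β.sum = α.sum ∧ Dset α ⊆ Dset β

instance : ∀ β α : List ℕ, Decidable (Refines β α) := fun _ _ => by
  unfold Refines; infer_instance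

/-- The fundamental quasisymmetric function `F_α = ∑_{β ≤ α} M_β`, realized as
a formal power series in countably many variables: the coefficient of a
monomial is `1` exactly when its exponent composition refines `α` (each
monomial occurs in `M_β` for exactly one `β`, namely its exponent
composition). -/
noncomputable def Fqs (K : Type) [Field K] (α : List ℕ) : MvPowerSeries ℕ K :=
  fun d => if Refines (expComp d) α then (1 : K) else 0

lemma toFinset_map (f : ℕ → ℕ) (l : List ℕ) : (l.map f).toFinset = l.toFinset.image f := by
  induction l with
  | nil => simp
  | cons a t ih => simp [ih]

lemma psums_ne_nil {γ : List ℕ} (h : γ ≠ []) : psums γ ≠ [] := by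
  cases γ with
  | nil => simp at h
  | cons a t => simp [psums]

lemma Dset_nil : Dset [] = ∅ := rfl

lemma Dset_single (c : ℕ) : Dset [c] = ∅ := rfl

lemma Dset_cons (c : ℕ) {γ : List ℕ} (h : γ ≠ []) :
    Dset (c :: γ) = insert c ((Dset γ).image (c + ·)) := by
  unfold Dset
  rw [show psums (c :: γ) = c :: (psums γ).map (c + ·) from rfl]
  rw [List.dropLast_cons_of_ne_nil (by simp [psums_ne_nil h]), ← List.map_dropLast]
  rw [List.toFinset_cons, toFinset_map]

lemma descComp_ne_nil : ∀ {w : List ℕ}, w ≠ [] → descComp w ≠ []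
  | [a], _ => by simp [descComp]
  | a :: b :: t, _ => by
      by_cases h : b < a
      · simp [descComp, h]
      · simp only [descComp, if_neg h]
        rcases hd : descComp (b :: t) with _ | ⟨c, r⟩ <;> simp

lemma descComp_sum : ∀ w : List ℕ, (descComp w).sum = w.length
  | [] => rfl
  | [a] => rfl
  | a :: b :: t => by
      have ih := descComp_sum (b :: t)
      by_cases h : b < a
      · simp only [descComp, if_pos h, List.sum_cons, ih]
        simp only [List.length_cons]; omega
      · simp only [descComp, if_neg h]
        rcases hd : descComp (b :: t) with _ | ⟨c, r⟩
        · exact absurd hd (descComp_ne_nil (by simp))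
        · rw [hd] at ih
          simp only [List.sum_cons, List.length_cons] at ih ⊢; omega

lemma Dset_descComp_cons₂ (a b : ℕ) (t : List ℕ) :
    Dset (descComp (a :: b :: t)) =
      (if b < a then insert 1 ((Dset (descComp (b :: t))).image (· + 1))
       else (Dset (descComp (b :: t))).image (· + 1)) := by
  have hne : descComp (b :: t) ≠ [] := descComp_ne_nil (by simp)
  by_cases h : b < a
  · rw [if_pos h]
    have h1 : descComp (a :: b :: t) = 1 :: descComp (b :: t) := by
      simp [descComp, h]
    rw [h1, Dset_cons 1 hne]
    congr 1
    ext x; simp [add_comm]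
  · rw [if_neg h]
    rcases hd : descComp (b :: t) with _ | ⟨c, r⟩
    · exact absurd hd hne
    have h1 : descComp (a :: b :: t) = (c + 1) :: r := by
      simp [descComp, h, hd]
    rw [h1]
    rcases eq_or_ne r [] with rfl | hr
    · simp [Dset_single]
    · rw [Dset_cons _ hr, Dset_cons _ hr]
      ext x
      simp only [Finset.mem_insert, Finset.mem_image]
      constructor
      · rintro (rfl | ⟨y, hy, rfl⟩)
        · exact ⟨c, Or.inl rfl, by omega⟩
        · exact ⟨c + y, Or.inr ⟨y, hy, rfl⟩, by omega⟩
      · rintro ⟨z, (rfl | ⟨y, hy, rfl⟩), rfl⟩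
        · left; omega
        · right; exact ⟨y, hy, by omega⟩

lemma zero_not_mem_Dset_descComp (w : List ℕ) : 0 ∉ Dset (descComp w) := by
  match w with
  | [] => simp [descComp, Dset_nil]
  | [a] => simp [descComp, Dset_single]
  | a :: b :: t =>
      rw [Dset_descComp_cons₂]
      by_cases h : b < a <;> simp [h]

lemma succ_mem_Dset_descComp : ∀ (w : List ℕ) (j : ℕ),
    (j + 1) ∈ Dset (descComp w) ↔ (j + 1 < w.length ∧ w.getD (j+1) 0 < w.getD j 0)
  | [], j => by simp [descComp, Dset_nil]
  | [a], j => by simp [descComp, Dset_single]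
  | a :: b :: t, j => by
      have ih := succ_mem_Dset_descComp (b :: t)
      rw [Dset_descComp_cons₂]
      by_cases h : b < a
      · rw [if_pos h]
        simp only [Finset.mem_insert, Finset.mem_image]
        cases j with
        | zero =>
            simp only [List.getD_cons_succ, List.getD_cons_zero, List.length_cons]
            constructor
            · intro _; exact ⟨by omega, h⟩
            · intro _; exact Or.inl trivial
        | succ i =>
            constructor
            · rintro (hx | ⟨y, hy, hxy⟩)
              · omega
              · have hyi : y = i + 1 := by omega
                subst hyi
                rw [ih] at hy
                simp only [List.length_cons] at hy ⊢
                simp only [List.getD_cons_succ]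
                exact ⟨by omega, hy.2⟩
            · rintro ⟨hlen, hlt⟩
              right
              refine ⟨i + 1, ?_, by omega⟩
              rw [ih]
              simp only [List.length_cons] at hlen ⊢
              simp only [List.getD_cons_succ] at hlt
              exact ⟨by omega, hlt⟩
      · rw [if_neg h]
        simp only [Finset.mem_image]
        cases j with
        | zero =>
            simp only [List.getD_cons_succ, List.getD_cons_zero, List.length_cons]
            constructor
            · rintro ⟨y, hy, hxy⟩
              have : y = 0 := by omega
              subst this
              exact absurd hy (zero_not_mem_Dset_descComp _)
            · intro hx; exact absurd hx.2 h
        | succ i =>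
            constructor
            · rintro ⟨y, hy, hxy⟩
              have hyi : y = i + 1 := by omega
              subst hyi
              rw [ih] at hy
              simp only [List.length_cons] at hy ⊢
              simp only [List.getD_cons_succ]
              exact ⟨by omega, hy.2⟩
            · rintro ⟨hlen, hlt⟩
              refine ⟨i + 1, ?_, by omega⟩
              rw [ih]
              simp only [List.length_cons] at hlen ⊢
              simp only [List.getD_cons_succ] at hlt
              exact ⟨by omega, hlt⟩

def flatRep (e : ℕ → ℕ) (ks : List ℕ) : List ℕ :=
  ks.flatMap fun k => List.replicate (e k) k

lemma flatRep_nil (e : ℕ → ℕ) : flatRep e [] = [] := rfl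

lemma flatRep_cons (e : ℕ → ℕ) (k : ℕ) (ks : List ℕ) :
    flatRep e (k :: ks) = List.replicate (e k) k ++ flatRep e ks := rfl

lemma flatRep_length (e : ℕ → ℕ) (ks : List ℕ) :
    (flatRep e ks).length = (ks.map e).sum := by
  induction ks with
  | nil => rfl
  | cons k ks ih => simp [flatRep_cons, ih]

lemma getD_replicate {n j a : ℕ} (h : j < n) : (List.replicate n a).getD j 0 = a := by
  rw [List.getD_eq_getElem _ _ (by simpa using h)]
  simp

lemma flatRep_sorted (e : ℕ → ℕ) : ∀ {ks : List ℕ}, ks.Pairwise (· < ·) →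
    (flatRep e ks).Pairwise (· ≤ ·)
  | [], _ => by simp [flatRep_nil]
  | k :: ks, h => by
      rw [flatRep_cons]
      rw [List.pairwise_append]
      refine ⟨?_, flatRep_sorted e (List.pairwise_cons.mp h).2, ?_⟩
      · exact List.pairwise_replicate.mpr (Or.inr le_rfl)
      · intro x hx y hy
        rcases List.mem_flatMap.mp hy with ⟨k', hk', hy'⟩
        have := (List.pairwise_cons.mp h).1 k' hk'
        rw [List.eq_of_mem_replicate hx, List.eq_of_mem_replicate hy']
        omega

lemma flatRep_head (e : ℕ → ℕ) (k : ℕ) (ks : List ℕ) (h : 0 < e k) :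
    (flatRep e (k :: ks)).getD 0 0 = k := by
  rw [flatRep_cons, List.getD_append _ _ _ _ (by simpa using h), getD_replicate h]

lemma flatRep_rise_iff (e : ℕ → ℕ) : ∀ (ks : List ℕ), ks.Pairwise (· < ·) →
    (∀ k ∈ ks, 0 < e k) → ∀ j : ℕ,
    (j ∈ Dset (ks.map e) ↔
      (0 < j ∧ j < (flatRep e ks).length ∧
        (flatRep e ks).getD (j-1) 0 < (flatRep e ks).getD j 0))
  | [], _, _, j => by
      simp [Dset_nil, flatRep_nil]
  | [k], _, _, j => by
      simp only [List.map_cons, List.map_nil, Dset_single]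
      simp only [Finset.notMem_empty, false_iff]
      rintro ⟨h0, h1, h2⟩
      rw [flatRep_cons, flatRep_nil, List.append_nil] at h1 h2
      rw [getD_replicate (by simp at h1; omega), getD_replicate (by simpa using h1)] at h2
      omega
  | k :: k₁ :: ks, hp, hpos, j => by
      have hp' := (List.pairwise_cons.mp hp).2
      have ih := flatRep_rise_iff e (k₁ :: ks) hp' (fun x hx => hpos x (List.mem_cons_of_mem _ hx))
      set l' := flatRep e (k₁ :: ks) with hl'
      have hc : 0 < e k := hpos k (by simp)
      have hlen : (flatRep e (k :: k₁ :: ks)).length = e k + l'.length := by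
        rw [flatRep_cons]; simp; rfl
      have hl'len : 0 < l'.length := by
        rw [hl', flatRep_cons]
        simp only [List.length_append, List.length_replicate]
        have := hpos k₁ (by simp); omega
      have hgetD : ∀ i : ℕ, e k ≤ i → (flatRep e (k :: k₁ :: ks)).getD i 0 = l'.getD (i - e k) 0 := by
        intro i hi
        rw [flatRep_cons, List.getD_append_right _ _ _ _ (by simpa using hi)]
        simp; rfl
      have hgetDlow : ∀ i : ℕ, i < e k → (flatRep e (k :: k₁ :: ks)).getD i 0 = k := by
        intro i hi
        rw [flatRep_cons, List.getD_append _ _ _ _ (by simpa using hi), getD_replicate hi]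
      rw [List.map_cons, Dset_cons _ (by simp)]
      simp only [Finset.mem_insert, Finset.mem_image]
      constructor
      · rintro (rfl | ⟨y, hy, rfl⟩)
        · refine ⟨hc, by omega, ?_⟩
          rw [hgetDlow _ (by omega), hgetD _ (by omega)]
          have h0 : l'.getD (e k - e k) 0 = k₁ := by
            rw [Nat.sub_self, hl', flatRep_head e k₁ ks (hpos k₁ (by simp))]
          rw [h0]
          exact (List.pairwise_cons.mp hp).1 k₁ (by simp)
        · rw [ih] at hy
          obtain ⟨hy0, hy1, hy2⟩ := hy
          refine ⟨by omega, by omega, ?_⟩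
          rw [hgetD _ (by omega), hgetD _ (by omega)]
          have e1 : e k + y - 1 - e k = y - 1 := by omega
          have e2 : e k + y - e k = y := by omega
          rw [e1, e2]
          exact hy2
      · rintro ⟨h0, h1, h2⟩
        by_cases hj : j < e k
        · exfalso
          rw [hgetDlow _ (by omega), hgetDlow _ hj] at h2
          omega
        · by_cases hj2 : j = e k
          · exact Or.inl hj2
          · right
            refine ⟨j - e k, ?_, by omega⟩
            rw [ih]
            refine ⟨by omega, by omega, ?_⟩
            rw [hgetD _ (by omega), hgetD _ (by omega)] at h2
            have e1 : j - 1 - e k = j - e k - 1 := by omega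
            rw [e1] at h2
            exact h2

lemma flatRep_count (e : ℕ → ℕ) (a : ℕ) : ∀ (ks : List ℕ), ks.Nodup →
    (flatRep e ks).count a = if a ∈ ks then e a else 0
  | [], _ => by simp [flatRep_nil]
  | k :: ks, h => by
      rw [flatRep_cons, List.count_append, List.count_replicate,
        flatRep_count e a ks (List.nodup_cons.mp h).2]
      have hk := (List.nodup_cons.mp h).1
      by_cases hak : a = k
      · subst hak
        simp [hk]
      · simp [hak, Ne.symm hak, beq_iff_eq]

noncomputable def mono (e : ℕ →₀ ℕ) : List ℕ := flatRep e (e.support.sort (· ≤ ·))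

lemma mono_sorted (e : ℕ →₀ ℕ) : (mono e).Pairwise (· ≤ ·) :=
  flatRep_sorted _ (e.support.sortedLT_sort.pairwise)

lemma mono_length (e : ℕ →₀ ℕ) : (mono e).length = (expComp e).sum :=
  flatRep_length _ _

lemma mono_rise_iff (e : ℕ →₀ ℕ) (j : ℕ) :
    j ∈ Dset (expComp e) ↔
      (0 < j ∧ j < (mono e).length ∧ (mono e).getD (j-1) 0 < (mono e).getD j 0) :=
  flatRep_rise_iff _ _ (e.support.sortedLT_sort.pairwise) (fun k hk => by
    have : k ∈ e.support := (Finset.mem_sort _).mp hk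
    have h2 := Finsupp.mem_support_iff.mp this
    omega) j

lemma mono_coe (e : ℕ →₀ ℕ) : (mono e : Multiset ℕ) = Finsupp.toMultiset e := by
  ext a
  rw [Multiset.coe_count, Finsupp.count_toMultiset, mono,
    flatRep_count (⇑e) a _ (e.support.sort_nodup _)]
  by_cases ha : a ∈ e.support
  · simp [Finset.mem_sort, ha]
  · rw [if_neg (by simpa [Finset.mem_sort] using ha)]
    exact (Finsupp.notMem_support_iff.mp ha).symm

lemma mono_unique {e : ℕ →₀ ℕ} {f : List ℕ} (hs : f.Pairwise (· ≤ ·))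
    (hm : (f : Multiset ℕ) = Finsupp.toMultiset e) : f = mono e := by
  apply List.Perm.eq_of_pairwise' hs (mono_sorted e)
  rw [← Multiset.coe_eq_coe, hm, mono_coe]

def key : ℕ × ℕ → ℕ × ℕ → Prop := fun p q => p.2 < q.2 ∨ (p.2 = q.2 ∧ p.1 ≤ q.1)

instance : IsTrans (ℕ × ℕ) key :=
  ⟨by rintro ⟨a, x⟩ ⟨b, y⟩ ⟨c, z⟩ h1 h2; unfold key at *; dsimp at *; omega⟩

instance : IsAntisymm (ℕ × ℕ) key :=
  ⟨by rintro ⟨a, x⟩ ⟨b, y⟩ h1 h2; unfold key at *; dsimp at *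
      have : a = b ∧ x = y := by omega
      simp [this.1, this.2]⟩

instance : IsTotal (ℕ × ℕ) key :=
  ⟨by rintro ⟨a, x⟩ ⟨b, y⟩; unfold key; dsimp; omega⟩

instance : DecidableRel key := fun p q => by unfold key; infer_instance

lemma cpt_iff (w : List ℕ) (e : ℕ →₀ ℕ) :
    Refines (expComp e) (descComp w) ↔
      ((mono e).length = w.length ∧ List.Chain' key (w.zip (mono e))) := by
  unfold Refines
  have hsum : (expComp e).sum = (descComp w).sum ↔ (mono e).length = w.length := by
    rw [mono_length, descComp_sum]
  constructor
  · rintro ⟨h1, h2⟩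
    have hlen : (mono e).length = w.length := hsum.mp h1
    refine ⟨hlen, ?_⟩
    refine List.isChain_iff_getElem.mpr ?_
    intro i hi
    have hzl : (w.zip (mono e)).length = w.length := by
      rw [List.length_zip, hlen, min_self]
    rw [hzl] at hi
    have hi1 : i < w.length := by omega
    have hi2 : i + 1 < w.length := by omega
    simp only [List.get_eq_getElem, List.getElem_zip]
    have hmle : (mono e)[i] ≤ (mono e)[i+1] :=
      (mono_sorted e).rel_get_of_lt (a := ⟨i, by omega⟩) (b := ⟨i+1, by omega⟩)
        (by simp)
    rcases lt_or_eq_of_le hmle with hlt | heq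
    · exact Or.inl hlt
    · refine Or.inr ⟨heq, ?_⟩
      by_contra hcon
      push_neg at hcon
      have hdesc : (i + 1) ∈ Dset (descComp w) := by
        rw [succ_mem_Dset_descComp]
        refine ⟨hi2, ?_⟩
        rw [List.getD_eq_getElem _ _ hi2, List.getD_eq_getElem _ _ hi1]
        omega
      have := (mono_rise_iff e (i+1)).mp (h2 hdesc)
      rw [List.getD_eq_getElem _ _ (by omega), List.getD_eq_getElem _ _ (by omega)] at this
      simp only [Nat.add_sub_cancel] at this
      omega
  · rintro ⟨hlen, hch⟩
    refine ⟨hsum.mpr hlen, ?_⟩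
    intro j hj
    rcases Nat.eq_zero_or_pos j with rfl | hj0
    · exact absurd hj (zero_not_mem_Dset_descComp w)
    obtain ⟨i, rfl⟩ : ∃ i, j = i + 1 := ⟨j - 1, by omega⟩
    obtain ⟨hi2, hdesc⟩ := (succ_mem_Dset_descComp w i).mp hj
    have hzl : (w.zip (mono e)).length = w.length := by
      rw [List.length_zip, hlen, min_self]
    have hkey := (List.isChain_iff_getElem.mp hch) i (by omega)
    simp only [List.get_eq_getElem, List.getElem_zip] at hkey
    rw [List.getD_eq_getElem _ _ hi2, List.getD_eq_getElem _ _ (by omega)] at hdesc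
    rw [mono_rise_iff]
    refine ⟨by omega, by omega, ?_⟩
    simp only [Nat.add_sub_cancel]
    rw [List.getD_eq_getElem (mono e) 0 (n := i) (by omega),
        List.getD_eq_getElem (mono e) 0 (n := i + 1) (by omega)]
    unfold key at hkey
    dsimp at hkey
    omega

section Merge

variable {α : Type*} (r : α → α → Prop) [DecidableRel r]

def mrg : List α → List α → List α
  | [], l => l
  | a :: l, [] => a :: l
  | a :: l, b :: m => if r a b then a :: mrg l (b :: m) else b :: mrg (a :: l) m
  termination_by l m => l.length + m.length

lemma mrg_perm : ∀ l m : List α, (mrg r l m).Perm (l ++ m)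
  | [], l => by simp [mrg]
  | a :: l, [] => by simp [mrg]
  | a :: l, b :: m => by
      rw [mrg]
      split
      · exact ((mrg_perm l (b :: m)).cons a).trans (by simp)
      · refine ((mrg_perm (a :: l) m).cons b).trans ?_
        refine (List.Perm.trans ?_ (List.perm_middle).symm)
        simp
  termination_by l m => l.length + m.length

lemma mrg_sublist_left : ∀ l m : List α, l.Sublist (mrg r l m)
  | [], l => by simp [mrg]
  | a :: l, [] => by simp [mrg]
  | a :: l, b :: m => by
      rw [mrg]
      split
      · exact (mrg_sublist_left l (b :: m)).cons₂ a
      · exact (mrg_sublist_left (a :: l) m).cons b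
  termination_by l m => l.length + m.length

lemma mrg_sublist_right : ∀ l m : List α, m.Sublist (mrg r l m)
  | [], l => by simp [mrg]
  | a :: l, [] => by simp [mrg]
  | a :: l, b :: m => by
      rw [mrg]
      split
      · exact (mrg_sublist_right l (b :: m)).cons a
      · exact (mrg_sublist_right (a :: l) m).cons₂ b
  termination_by l m => l.length + m.length

lemma mrg_sorted [IsTotal α r] [IsTrans α r] : ∀ l m : List α,
    l.Pairwise r → m.Pairwise r → (mrg r l m).Pairwise r
  | [], l => fun _ h => by simpa [mrg] using h
  | a :: l, [] => fun h _ => by simpa [mrg] using h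
  | a :: l, b :: m => fun h1 h2 => by
      rw [mrg]
      obtain ⟨ha, hl⟩ := List.pairwise_cons.mp h1
      obtain ⟨hb, hm⟩ := List.pairwise_cons.mp h2
      split
      · rename_i hab
        rw [List.pairwise_cons]
        refine ⟨?_, mrg_sorted l (b :: m) hl h2⟩
        intro x hx
        rcases List.mem_append.mp ((mrg_perm r l (b :: m)).mem_iff.mp hx) with hxl | hxm
        · exact ha x hxl
        · rcases List.mem_cons.mp hxm with rfl | hxm'
          · exact hab
          · exact Trans.trans hab (hb x hxm')
      · rename_i hab
        have hba : r b a := (Std.Total.total (r := r) a b).resolve_left hab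
        rw [List.pairwise_cons]
        refine ⟨?_, mrg_sorted (a :: l) m h1 hm⟩
        intro x hx
        rcases List.mem_append.mp ((mrg_perm r (a :: l) m).mem_iff.mp hx) with hxl | hxm
        · rcases List.mem_cons.mp hxl with rfl | hxl'
          · exact hba
          · exact Trans.trans hba (ha x hxl')
        · exact hb x hxm
  termination_by l m => l.length + m.length

end Merge

section Shuffles

variable {α : Type*} [DecidableEq α]

lemma shuffles_perm : ∀ {u v w : List α}, w ∈ shuffles u v → w.Perm (u ++ v)
  | [], v, w => by
      rw [shuffles]
      intro h
      rw [Multiset.mem_singleton.mp h]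
      simp
  | a :: u, [], w => by
      rw [shuffles]
      intro h
      rw [Multiset.mem_singleton.mp h]
      simp
  | a :: u, b :: v, w => by
      rw [shuffles]
      intro h
      rcases Multiset.mem_add.mp h with h' | h' <;>
        obtain ⟨w', hw', rfl⟩ := Multiset.mem_map.mp h'
      · exact ((shuffles_perm hw').cons a).trans (by simp)
      · refine ((shuffles_perm hw').cons b).trans ?_
        exact (List.perm_middle).symm
  termination_by u v _ => u.length + v.length

lemma shuffles_nodup : ∀ {u v : List α}, (∀ x ∈ u, ∀ y ∈ v, x ≠ y) →
    (shuffles u v).Nodup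
  | [], v, _ => by rw [shuffles]; simp
  | a :: u, [], _ => by rw [shuffles]; simp
  | a :: u, b :: v, hd => by
      rw [shuffles]
      have h1 : (shuffles u (b :: v)).Nodup :=
        shuffles_nodup (fun x hx y hy => hd x (List.mem_cons_of_mem _ hx) y hy)
      have h2 : (shuffles (a :: u) v).Nodup :=
        shuffles_nodup (fun x hx y hy => hd x hx y (List.mem_cons_of_mem _ hy))
      rw [Multiset.nodup_add]
      refine ⟨h1.map (fun x y hxy => by simpa using hxy),
        h2.map (fun x y hxy => by simpa using hxy), ?_⟩
      rw [Multiset.disjoint_left]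
      intro z hz1 hz2
      obtain ⟨w1, _, hw1⟩ := Multiset.mem_map.mp hz1
      obtain ⟨w2, _, hw2⟩ := Multiset.mem_map.mp hz2
      have : a = b := by
        have := hw1.trans hw2.symm
        simpa using congrArg (fun l => l.head?) this
      exact hd a (by simp) b (by simp) this
  termination_by u v => u.length + v.length

lemma shuffles_filter : ∀ {u v w : List α}, w ∈ shuffles u v → u.Nodup →
    (∀ x ∈ u, ∀ y ∈ v, x ≠ y) →
    w.filter (· ∈ u) = u ∧ w.filter (· ∉ u) = v
  | [], v, w, hw, _, _ => by
      rw [shuffles] at hw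
      rw [Multiset.mem_singleton.mp hw]
      simp
  | a :: u, [], w, hw, _, _ => by
      rw [shuffles] at hw
      rw [Multiset.mem_singleton.mp hw]
      constructor
      · apply List.filter_eq_self.mpr
        intro x hx; simp [hx]
      · apply List.filter_eq_nil_iff.mpr
        intro x hx; simp [hx]
  | a :: u, b :: v, w, hw, hu, hd => by
      rw [shuffles] at hw
      have hau : a ∉ u := (List.nodup_cons.mp hu).1
      have hab : ∀ y ∈ b :: v, a ≠ y := fun y hy => hd a (by simp) y hy
      rcases Multiset.mem_add.mp hw with h' | h' <;>
        obtain ⟨w', hw', rfl⟩ := Multiset.mem_map.mp h'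
      · obtain ⟨ih1, ih2⟩ := shuffles_filter hw' (List.nodup_cons.mp hu).2
          (fun x hx y hy => hd x (List.mem_cons_of_mem _ hx) y hy)
        have hcong : ∀ x ∈ w', (decide (x ∈ a :: u)) = (decide (x ∈ u)) := by
          intro x hx
          have hx' : x ∈ u ++ (b :: v) := (shuffles_perm hw').subset hx
          have hxa : x ≠ a := by
            rintro rfl
            rcases List.mem_append.mp hx' with h | h
            · exact hau h
            · exact hab x h rfl
          simp only [decide_eq_decide, List.mem_cons]
          exact or_iff_right hxa
        constructor
        · rw [List.filter_cons_of_pos (by simp), List.filter_congr hcong, ih1]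
        · rw [List.filter_cons_of_neg (by simp)]
          have hcong' : ∀ x ∈ w', (decide (x ∉ a :: u)) = (decide (x ∉ u)) := by
            intro x hx
            have := hcong x hx
            simp only [decide_eq_decide] at this ⊢
            simp [this]
          rw [List.filter_congr hcong', ih2]
      · obtain ⟨ih1, ih2⟩ := shuffles_filter hw' hu
          (fun x hx y hy => hd x hx y (List.mem_cons_of_mem _ hy))
        have hbu : b ∉ a :: u := by
          intro h
          exact hd b h b (by simp) rfl
        constructor
        · rw [List.filter_cons_of_neg (by simpa using hbu), ih1]
        · rw [List.filter_cons_of_pos (by simpa using hbu), ih2]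
  termination_by u v _ => u.length + v.length

lemma mem_shuffles_cons_left {w u v : List α} (c : α) (h : w ∈ shuffles u v) :
    c :: w ∈ shuffles (c :: u) v := by
  match v with
  | [] =>
      match u with
      | [] =>
          simp only [shuffles] at h ⊢
          rw [Multiset.mem_singleton.mp h]
          exact Multiset.mem_singleton_self _
      | a :: u' =>
          simp only [shuffles] at h ⊢
          rw [Multiset.mem_singleton.mp h]
          exact Multiset.mem_singleton_self _
  | b :: v' =>
      rw [shuffles]
      exact Multiset.mem_add.mpr (Or.inl (Multiset.mem_map_of_mem _ h))

lemma mem_shuffles_cons_right {w u v : List α} (c : α) (h : w ∈ shuffles u v) :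
    c :: w ∈ shuffles u (c :: v) := by
  match u with
  | [] =>
      simp only [shuffles] at h ⊢
      rw [Multiset.mem_singleton.mp h]
      exact Multiset.mem_singleton_self _
  | a :: u' =>
      rw [shuffles]
      exact Multiset.mem_add.mpr (Or.inr (Multiset.mem_map_of_mem _ h))

lemma mem_shuffles_of_filter : ∀ {w u v : List α}, w.Nodup →
    w.filter (· ∈ u) = u → w.filter (· ∉ u) = v → w ∈ shuffles u v
  | [], u, v, _, h1, h2 => by
      simp only [List.filter_nil] at h1 h2
      subst h1
      subst h2
      rw [shuffles]
      simp
  | c :: w', u, v, hn, h1, h2 => by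
      have hcw : c ∉ w' := (List.nodup_cons.mp hn).1
      by_cases hc : c ∈ u
      · rw [List.filter_cons_of_pos (by simpa using hc)] at h1
        rw [List.filter_cons_of_neg (by simpa using hc)] at h2
        obtain ⟨u', rfl⟩ : ∃ u', u = c :: u' := ⟨_, h1.symm⟩
        have h1' : w'.filter (· ∈ u') = u' := by
          have hcong : ∀ x ∈ w', (decide (x ∈ c :: u')) = (decide (x ∈ u')) := by
            intro x hx
            have : x ≠ c := fun h => hcw (h ▸ hx)
            simp [List.mem_cons, this]
          rw [← List.filter_congr hcong]
          exact List.cons_injective.eq_iff.mp h1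
        have h2' : w'.filter (· ∉ u') = v := by
          have hcong : ∀ x ∈ w', (decide (x ∉ c :: u')) = (decide (x ∉ u')) := by
            intro x hx
            have : x ≠ c := fun h => hcw (h ▸ hx)
            simp [List.mem_cons, this]
          rw [← List.filter_congr hcong]
          exact h2
        exact mem_shuffles_cons_left c
          (mem_shuffles_of_filter (List.nodup_cons.mp hn).2 h1' h2')
      · rw [List.filter_cons_of_neg (by simpa using hc)] at h1
        rw [List.filter_cons_of_pos (by simpa using hc)] at h2
        obtain ⟨v', rfl⟩ : ∃ v', v = c :: v' := ⟨_, h2.symm⟩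
        have h2' : w'.filter (· ∉ u) = v' := List.cons_injective.eq_iff.mp h2
        exact mem_shuffles_cons_right c
          (mem_shuffles_of_filter (List.nodup_cons.mp hn).2 h1 h2')

end Shuffles

lemma filter_sublist_eq {α : Type*} [DecidableEq α] :
    ∀ {A C : List α}, A.Sublist C → C.Nodup → C.filter (· ∈ A) = A := by
  intro A C h
  induction h with
  | slnil => intro _; rfl
  | @cons A' C' c h ih =>
      intro hn
      have hcC : c ∉ C' := (List.nodup_cons.mp hn).1
      have hcA : c ∉ A' := fun hc => hcC (h.subset hc)
      rw [List.filter_cons_of_neg (by simpa using hcA), ih (List.nodup_cons.mp hn).2]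
  | @cons_cons A' C' c h ih =>
      intro hn
      have hcC : c ∉ C' := (List.nodup_cons.mp hn).1
      rw [List.filter_cons_of_pos (by simp)]
      congr 1
      have hcong : ∀ x ∈ C', (decide (x ∈ c :: A')) = (decide (x ∈ A')) := by
        intro x hx
        have hxc : x ≠ c := fun h' => hcC (h' ▸ hx)
        simp only [decide_eq_decide, List.mem_cons]
        exact or_iff_right hxc
      rw [List.filter_congr hcong, ih (List.nodup_cons.mp hn).2]

lemma zip_fst_snd {γ δ : Type*} : ∀ L : List (γ × δ), (L.map Prod.fst).zip (L.map Prod.snd) = L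
  | [] => rfl
  | p :: L => by simp [zip_fst_snd L]

lemma key_snd_le {p q : ℕ × ℕ} (h : key p q) : p.2 ≤ q.2 := by
  unfold key at h; omega

section Bij

variable {u v : List ℕ}

lemma merge_facts (hu : u.Nodup) (hv : v.Nodup) (hdisj : ∀ x ∈ u, ∀ y ∈ v, x ≠ y)
    {d d1 d2 : ℕ →₀ ℕ} (h1 : Refines (expComp d1) (descComp u))
    (h2 : Refines (expComp d2) (descComp v)) (hsum : d1 + d2 = d) :
    ((mrg key (u.zip (mono d1)) (v.zip (mono d2))).map Prod.fst) ∈ shuffles u v ∧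
    Refines (expComp d) (descComp ((mrg key (u.zip (mono d1)) (v.zip (mono d2))).map Prod.fst)) ∧
    (mrg key (u.zip (mono d1)) (v.zip (mono d2))).filter (fun p => decide (p.1 ∈ u))
      = u.zip (mono d1) ∧
    (mrg key (u.zip (mono d1)) (v.zip (mono d2))).filter (fun p => !decide (p.1 ∈ u))
      = v.zip (mono d2) ∧
    (mrg key (u.zip (mono d1)) (v.zip (mono d2))).map Prod.snd = mono d := by
  obtain ⟨len1, ch1⟩ := (cpt_iff u d1).mp h1
  obtain ⟨len2, ch2⟩ := (cpt_iff v d2).mp h2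
  set L1 := u.zip (mono d1) with hL1
  set L2 := v.zip (mono d2) with hL2
  set M := mrg key L1 L2 with hM
  have hfst1 : L1.map Prod.fst = u := List.map_fst_zip (by omega)
  have hsnd1 : L1.map Prod.snd = mono d1 := List.map_snd_zip (by omega)
  have hfst2 : L2.map Prod.fst = v := List.map_fst_zip (by omega)
  have hsnd2 : L2.map Prod.snd = mono d2 := List.map_snd_zip (by omega)
  have s1 : L1.Pairwise key := List.isChain_iff_pairwise.mp ch1
  have s2 : L2.Pairwise key := List.isChain_iff_pairwise.mp ch2
  have sM : M.Pairwise key := mrg_sorted key L1 L2 s1 s2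
  have pM : M.Perm (L1 ++ L2) := mrg_perm key L1 L2
  have pfst : (M.map Prod.fst).Perm (u ++ v) := by
    have := pM.map Prod.fst
    rwa [List.map_append, hfst1, hfst2] at this
  have huv : (u ++ v).Nodup :=
    hu.append hv (fun a ha hb => hdisj a ha a hb rfl)
  have hwnodup : (M.map Prod.fst).Nodup := pfst.nodup_iff.mpr huv
  have hMnodup : M.Nodup := hwnodup.of_map Prod.fst
  -- labels of M
  have s5 : (M.map Prod.snd).Pairwise (· ≤ ·) :=
    List.Pairwise.map Prod.snd (fun _ _ h => key_snd_le h) sM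
  have s6 : ((M.map Prod.snd : List ℕ) : Multiset ℕ) = Finsupp.toMultiset d := by
    have : (M.map Prod.snd).Perm (mono d1 ++ mono d2) := by
      have := pM.map Prod.snd
      rwa [List.map_append, hsnd1, hsnd2] at this
    rw [Multiset.coe_eq_coe.mpr this]
    rw [show ((mono d1 ++ mono d2 : List ℕ) : Multiset ℕ)
        = (mono d1 : Multiset ℕ) + (mono d2 : Multiset ℕ) from rfl]
    rw [mono_coe, mono_coe, ← map_add, hsum]
  have s7 : mono d = M.map Prod.snd := (mono_unique s5 s6).symm
  have s8 : (M.map Prod.fst).zip (mono d) = M := by rw [s7]; exact zip_fst_snd M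
  -- memberships of filtered pieces
  have mem1 : ∀ p ∈ M, (p ∈ L1 ↔ p.1 ∈ u) := by
    intro p hp
    constructor
    · intro hpl
      rcases p with ⟨x, y⟩
      exact (List.of_mem_zip hpl).1
    · intro hpu
      rcases List.mem_append.mp (pM.subset hp) with h | h
      · exact h
      · exfalso
        rcases p with ⟨x, y⟩
        exact hdisj x hpu x (List.of_mem_zip h).1 rfl
  have A4a : M.filter (fun p => decide (p.1 ∈ u)) = L1 := by
    have hsub : L1.Sublist M := mrg_sublist_left key L1 L2
    have := filter_sublist_eq hsub hMnodup
    rw [← this]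
    apply List.filter_congr
    intro p hp
    simpa [decide_eq_decide] using (mem1 p hp).symm
  have mem2 : ∀ p ∈ M, (p ∈ L2 ↔ p.1 ∉ u) := by
    intro p hp
    constructor
    · intro hpl
      rcases p with ⟨x, y⟩
      have : x ∈ v := (List.of_mem_zip hpl).1
      exact fun hxu => hdisj x hxu x this rfl
    · intro hpu
      rcases List.mem_append.mp (pM.subset hp) with h | h
      · exact absurd ((mem1 p hp).mp h) hpu
      · exact h
  have A4b : M.filter (fun p => !decide (p.1 ∈ u)) = L2 := by
    have hsub : L2.Sublist M := mrg_sublist_right key L1 L2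
    have := filter_sublist_eq hsub hMnodup
    rw [← this]
    apply List.filter_congr
    intro p hp
    have h2' := mem2 p hp
    by_cases hpu : p.1 ∈ u
    · have hnl : p ∉ L2 := fun h => (h2'.mp h) hpu
      simp [hpu, hnl]
    · have hl : p ∈ L2 := h2'.mpr hpu
      simp [hpu, hl]
  have A1 : (M.map Prod.fst) ∈ shuffles u v := by
    apply mem_shuffles_of_filter hwnodup
    · have e1 : (M.map Prod.fst).filter (fun x => decide (x ∈ u))
          = (M.filter (fun p => decide (p.1 ∈ u))).map Prod.fst := by
        rw [List.filter_map]
        rfl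
      rw [e1, A4a, hfst1]
    · have e1 : (M.map Prod.fst).filter (fun x => decide (x ∉ u))
          = (M.filter (fun p => decide (p.1 ∉ u))).map Prod.fst := by
        rw [List.filter_map]
        rfl
      have e2 : M.filter (fun p => decide (p.1 ∉ u)) = M.filter (fun p => !decide (p.1 ∈ u)) := by
        apply List.filter_congr
        intro p _
        simp [decide_not]
      rw [e1, e2, A4b, hfst2]
  have A2 : Refines (expComp d) (descComp (M.map Prod.fst)) := by
    rw [cpt_iff]
    constructor
    · rw [s7]; simp
    · rw [s8]
      exact sM.isChain
  exact ⟨A1, A2, A4a, A4b, s7.symm⟩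

end Bij

noncomputable def splitD (u : List ℕ) (d : ℕ →₀ ℕ) (w : List ℕ) : (ℕ →₀ ℕ) × (ℕ →₀ ℕ) :=
  (Multiset.toFinsupp ↑(((w.zip (mono d)).filter (fun p => decide (p.1 ∈ u))).map Prod.snd),
   Multiset.toFinsupp ↑(((w.zip (mono d)).filter (fun p => !decide (p.1 ∈ u))).map Prod.snd))

noncomputable def mergeW (u v : List ℕ) (d1 d2 : ℕ →₀ ℕ) : List ℕ :=
  (mrg key (u.zip (mono d1)) (v.zip (mono d2))).map Prod.fst

section Bij2

variable {u v : List ℕ}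

lemma split_facts (hu : u.Nodup) (hv : v.Nodup) (hdisj : ∀ x ∈ u, ∀ y ∈ v, x ≠ y)
    {d : ℕ →₀ ℕ} {w : List ℕ} (hw : w ∈ shuffles u v)
    (hc : Refines (expComp d) (descComp w)) :
    (splitD u d w).1 + (splitD u d w).2 = d ∧
    Refines (expComp (splitD u d w).1) (descComp u) ∧
    Refines (expComp (splitD u d w).2) (descComp v) ∧
    mergeW u v (splitD u d w).1 (splitD u d w).2 = w := by
  obtain ⟨hlen, hch⟩ := (cpt_iff w d).mp hc
  set L := w.zip (mono d) with hL
  have hfst : L.map Prod.fst = w := List.map_fst_zip (by omega)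
  have hsnd : L.map Prod.snd = mono d := List.map_snd_zip (by omega)
  have sL : L.Pairwise key := List.isChain_iff_pairwise.mp hch
  set La := L.filter (fun p => decide (p.1 ∈ u)) with hLa
  set Lb := L.filter (fun p => !decide (p.1 ∈ u)) with hLb
  have sLa : La.Pairwise key := List.Pairwise.sublist List.filter_sublist sL
  have sLb : Lb.Pairwise key := List.Pairwise.sublist List.filter_sublist sL
  obtain ⟨hfu, hfv⟩ := shuffles_filter hw hu hdisj
  have b5 : La.map Prod.fst = u := by
    have e1 : (L.map Prod.fst).filter (fun x => decide (x ∈ u)) = La.map Prod.fst := by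
      rw [hLa, List.filter_map]
      rfl
    rw [← e1, hfst, hfu]
  have b5b : Lb.map Prod.fst = v := by
    have e1 : (L.map Prod.fst).filter (fun x => decide (x ∉ u))
        = (L.filter (fun p => decide (p.1 ∉ u))).map Prod.fst := by
      rw [List.filter_map]
      rfl
    have e2 : L.filter (fun p => decide (p.1 ∉ u)) = Lb := by
      apply List.filter_congr
      intro p _
      simp [decide_not]
    rw [← hfv, ← hfst, e1, e2]
  set f1 := La.map Prod.snd with hf1
  set f2 := Lb.map Prod.snd with hf2
  have hd1 : (splitD u d w).1 = Multiset.toFinsupp ↑f1 := rfl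
  have hd2 : (splitD u d w).2 = Multiset.toFinsupp ↑f2 := rfl
  have f1s : f1.Pairwise (· ≤ ·) := List.Pairwise.map Prod.snd (fun _ _ h => key_snd_le h) sLa
  have f2s : f2.Pairwise (· ≤ ·) := List.Pairwise.map Prod.snd (fun _ _ h => key_snd_le h) sLb
  have hmono1 : mono (Multiset.toFinsupp ↑f1) = f1 :=
    (mono_unique f1s (by rw [Multiset.toFinsupp_toMultiset])).symm
  have hmono2 : mono (Multiset.toFinsupp ↑f2) = f2 :=
    (mono_unique f2s (by rw [Multiset.toFinsupp_toMultiset])).symm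
  have hzip1 : u.zip (mono (Multiset.toFinsupp ↑f1)) = La := by
    rw [hmono1, ← b5, hf1]
    exact zip_fst_snd La
  have hzip2 : v.zip (mono (Multiset.toFinsupp ↑f2)) = Lb := by
    rw [hmono2, ← b5b, hf2]
    exact zip_fst_snd Lb
  have cpt1 : Refines (expComp (splitD u d w).1) (descComp u) := by
    rw [hd1, cpt_iff]
    constructor
    · rw [hmono1, hf1, List.length_map, ← b5, List.length_map]
    · rw [hzip1]
      exact sLa.isChain
  have cpt2 : Refines (expComp (splitD u d w).2) (descComp v) := by
    rw [hd2, cpt_iff]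
    constructor
    · rw [hmono2, hf2, List.length_map, ← b5b, List.length_map]
    · rw [hzip2]
      exact sLb.isChain
  have hsum : (splitD u d w).1 + (splitD u d w).2 = d := by
    rw [hd1, hd2, ← map_add]
    have hperm : (La ++ Lb).Perm L := List.filter_append_perm _ L
    have hperm2 : (f1 ++ f2).Perm (mono d) := by
      rw [hf1, hf2, ← List.map_append, ← hsnd]
      exact hperm.map Prod.snd
    have : (↑f1 + ↑f2 : Multiset ℕ) = (mono d : Multiset ℕ) :=
      ((Multiset.coe_add f1 f2).symm).trans (Multiset.coe_eq_coe.mpr hperm2)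
    rw [this, mono_coe, Finsupp.toMultiset_toFinsupp]
  have hmerge : mergeW u v (splitD u d w).1 (splitD u d w).2 = w := by
    rw [mergeW, hd1, hd2, hzip1, hzip2]
    have sM : (mrg key La Lb).Pairwise key := mrg_sorted key La Lb sLa sLb
    have pM : (mrg key La Lb).Perm L := (mrg_perm key La Lb).trans (List.filter_append_perm _ L)
    have : mrg key La Lb = L := List.Perm.eq_of_pairwise' sM sL pM
    rw [this, hfst]
  exact ⟨hsum, cpt1, cpt2, hmerge⟩

lemma merge_split (hu : u.Nodup) (hv : v.Nodup) (hdisj : ∀ x ∈ u, ∀ y ∈ v, x ≠ y)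
    {d d1 d2 : ℕ →₀ ℕ} (h1 : Refines (expComp d1) (descComp u))
    (h2 : Refines (expComp d2) (descComp v)) (hsum : d1 + d2 = d) :
    splitD u d (mergeW u v d1 d2) = (d1, d2) := by
  obtain ⟨_, _, A4a, A4b, s7⟩ := merge_facts hu hv hdisj h1 h2 hsum
  set M := mrg key (u.zip (mono d1)) (v.zip (mono d2)) with hM
  have s8 : (M.map Prod.fst).zip (mono d) = M := by
    rw [← s7]
    exact zip_fst_snd M
  have hsnd1 : (u.zip (mono d1)).map Prod.snd = mono d1 :=
    List.map_snd_zip (by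
      have := ((cpt_iff u d1).mp h1).1
      omega)
  have hsnd2 : (v.zip (mono d2)).map Prod.snd = mono d2 :=
    List.map_snd_zip (by
      have := ((cpt_iff v d2).mp h2).1
      omega)
  have e1 : (splitD u d (mergeW u v d1 d2)).1 = d1 := by
    show Multiset.toFinsupp ↑((((M.map Prod.fst).zip (mono d)).filter
      (fun p => decide (p.1 ∈ u))).map Prod.snd) = d1
    rw [s8, A4a, hsnd1, mono_coe, Finsupp.toMultiset_toFinsupp]
  have e2 : (splitD u d (mergeW u v d1 d2)).2 = d2 := by
    show Multiset.toFinsupp ↑((((M.map Prod.fst).zip (mono d)).filter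
      (fun p => !decide (p.1 ∈ u))).map Prod.snd) = d2
    rw [s8, A4b, hsnd2, mono_coe, Finsupp.toMultiset_toFinsupp]
  exact Prod.ext e1 e2

end Bij2

lemma multiset_ite_sum {K : Type} [Field K] (S : Multiset (List ℕ)) (P : List ℕ → Prop)
    [DecidablePred P] :
    (S.map fun w => if P w then (1 : K) else 0).sum = ((S.filter P).card : K) := by
  induction S using Multiset.induction_on with
  | empty => simp
  | cons a S ih =>
      by_cases h : P a <;>
        simp [Multiset.filter_cons, h, ih] <;>
        push_cast <;>
        ring

/-- if `w_α`, `w_β` are words on disjoint alphabets with distinct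
letters whose descent compositions are `α ⊨ m` and `β ⊨ n`, then
`F_α · F_β = ∑_{w ∈ w_α ⧢ w_β} F_{Des w}`, summed over all shuffles of the two
words. -/
theorem fundamental_qsym_product (K : Type) [Field K] (m n : ℕ)
    (α β : List ℕ) (wα wβ : List ℕ)
    (hm : α.sum = m) (hn : β.sum = n)
    (hwα : wα.Nodup) (hwβ : wβ.Nodup)
    (hdisj : ∀ x ∈ wα, ∀ y ∈ wβ, x ≠ y)
    (hdα : descComp wα = α) (hdβ : descComp wβ = β) :
    Fqs K α * Fqs K β =
      ((shuffles wα wβ).map (fun w => Fqs K (descComp w))).sum := by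
  subst hdα
  subst hdβ
  apply MvPowerSeries.ext
  intro d
  have coeff_Fqs : ∀ (γ : List ℕ) (e : ℕ →₀ ℕ),
      (MvPowerSeries.coeff e) (Fqs K γ) = if Refines (expComp e) γ then 1 else 0 := by
    intro γ e
    rw [MvPowerSeries.coeff_apply]
    rfl
  rw [MvPowerSeries.coeff_mul]
  rw [map_multiset_sum, Multiset.map_map]
  have hR : ((shuffles wα wβ).map
      ((MvPowerSeries.coeff d) ∘ fun w => Fqs K (descComp w))).sum
      = ((shuffles wα wβ).map
        (fun w => if Refines (expComp d) (descComp w) then (1 : K) else 0)).sum := by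
    apply congrArg Multiset.sum
    apply Multiset.map_congr rfl
    intro w _
    simp only [Function.comp_apply, coeff_Fqs]
  rw [hR, multiset_ite_sum]
  have hL : (∑ p ∈ Finset.HasAntidiagonal.antidiagonal d,
        (MvPowerSeries.coeff p.1) (Fqs K (descComp wα)) *
          (MvPowerSeries.coeff p.2) (Fqs K (descComp wβ)))
      = ∑ p ∈ Finset.HasAntidiagonal.antidiagonal d,
        (if Refines (expComp p.1) (descComp wα) ∧ Refines (expComp p.2) (descComp wβ)
          then (1 : K) else 0) := by
    apply Finset.sum_congr rfl
    intro p _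
    rw [coeff_Fqs, coeff_Fqs]
    by_cases h1 : Refines (expComp p.1) (descComp wα) <;>
      by_cases h2 : Refines (expComp p.2) (descComp wβ) <;>
      simp [h1, h2]
  rw [hL, Finset.sum_boole]
  congr 1
  -- now a card equality of naturals
  set B : Finset (List ℕ) := ⟨shuffles wα wβ, shuffles_nodup hdisj⟩ with hB
  have hcard : ((shuffles wα wβ).filter (fun w => Refines (expComp d) (descComp w))).card
      = (B.filter (fun w => Refines (expComp d) (descComp w))).card := rfl
  rw [hcard]
  apply Finset.card_bij' (fun p _ => mergeW wα wβ p.1 p.2) (fun w _ => splitD wα d w)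
  · intro p hp
    rw [Finset.mem_filter] at hp
    obtain ⟨hmem, h1, h2⟩ := hp
    rw [Finset.HasAntidiagonal.mem_antidiagonal] at hmem
    obtain ⟨m1, m2, _, _, _⟩ := merge_facts hwα hwβ hdisj h1 h2 hmem
    rw [Finset.mem_filter]
    exact ⟨m1, m2⟩
  · intro w hw
    rw [Finset.mem_filter] at hw
    obtain ⟨hmem, hcpt⟩ := hw
    obtain ⟨hsum, h1, h2, _⟩ := split_facts hwα hwβ hdisj hmem hcpt
    rw [Finset.mem_filter, Finset.HasAntidiagonal.mem_antidiagonal]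
    exact ⟨hsum, h1, h2⟩
  · intro p hp
    rw [Finset.mem_filter] at hp
    obtain ⟨hmem, h1, h2⟩ := hp
    rw [Finset.HasAntidiagonal.mem_antidiagonal] at hmem
    rw [merge_split hwα hwβ hdisj h1 h2 hmem]
  · intro w hw
    rw [Finset.mem_filter] at hw
    obtain ⟨hmem, hcpt⟩ := hw
    exact (split_facts hwα hwβ hdisj hmem hcpt).2.2.2
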